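/- Let $T$ be a polygonal curve, $\Delta \ge 0$, and let $(S, f, g)$ be a pathlet-preserving simplification of $T$. Then for any $(\ell, \Delta)$-pathlet $(P, \mathcal{I})$ of $T$, there exists a subcurve $S[s,t]$ of $S$ such that $(S[s,t], \mathcal{I})$ is an $(\ell + 2 - |\mathbb{N} \cap \{s,t\}|, 4\Delta)$-pathlet of $T$. -/

import Mathlib

open Set

noncomputable section

/-- A reparameterization of `[0,1]` onto `[a,b]`: a continuous non-decreasing
surjection. -/
def IsReparamOn (f : ℝ → ℝ) (a b : ℝ) : Prop :=
  ContinuousOn f (Icc 0 1) ∧ MonotoneOn f (Icc 0 1) ∧ f '' Icc 0 1 = Icc a b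

/-- The (continuous) Fréchet distance between two curves parameterized
over `[0,1]`. -/
def frechetDist {d : ℕ} (P Q : ℝ → EuclideanSpace ℝ (Fin d)) : ℝ :=
  sInf {δ : ℝ | 0 ≤ δ ∧ ∃ f g : ℝ → ℝ, IsReparamOn f 0 1 ∧ IsReparamOn g 0 1 ∧
    ∀ t ∈ Icc (0 : ℝ) 1, dist (P (f t)) (Q (g t)) ≤ δ}

/-- A polygonal curve with `n` vertices: a map on `[1,n]` that is linear on
each integer cell `[i, i+1]`. -/
structure PolyCurve (d : ℕ) where
  n : ℕ
  hn : 1 ≤ n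
  map : ℝ → EuclideanSpace ℝ (Fin d)
  piecewise_linear : ∀ i : ℕ, 1 ≤ i → i + 1 ≤ n → ∀ t ∈ Icc (0 : ℝ) 1,
    map (i + t) = (1 - t) • map i + t • map (i + 1)

/-- The subcurve of `T` on `[a,b]`, renormalized to the parameter domain
`[0,1]`. -/
def subcurve {d : ℕ} (T : ℝ → EuclideanSpace ℝ (Fin d)) (a b : ℝ) :
    ℝ → EuclideanSpace ℝ (Fin d) :=
  fun t => T (a + t * (b - a))

/-- A polygonal curve renormalized to the parameter domain `[0,1]`. -/
def norm01 {d : ℕ} (P : PolyCurve d) : ℝ → EuclideanSpace ℝ (Fin d) :=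
  subcurve P.map 1 (P.n : ℝ)

/-- The set of reals that are integers. -/
def IntPts : Set ℝ := {x | ∃ k : ℤ, (k : ℝ) = x}

/-- `|ℕ ∩ {s, t}|`: the number of elements of `{s,t}` that are integers. -/
def natCount (s t : ℝ) : ℕ := (({s, t} : Set ℝ) ∩ IntPts).ncard

/-- The number of vertices of the subcurve `S[s,t]` of a polygonal curve:
the integer parameters in `[s,t]` plus the non-integer endpoints. -/
def vcount (s t : ℝ) : ℕ :=
  (Icc s t ∩ IntPts).ncard + ((({s, t} : Set ℝ) \ IntPts)).ncard

/-- `(P, I)` (a curve `P` on `[0,1]` of complexity `cP`, with a set `I` of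
parameter intervals of `T`) is an `(ℓ, Δ)`-pathlet of `T`. -/
def IsPathlet {d : ℕ} (T : PolyCurve d) (ℓ : ℕ) (Δ : ℝ)
    (P : ℝ → EuclideanSpace ℝ (Fin d)) (cP : ℕ) (I : Set (ℝ × ℝ)) : Prop :=
  cP ≤ ℓ ∧ ∀ ab ∈ I, 1 ≤ ab.1 ∧ ab.1 ≤ ab.2 ∧ ab.2 ≤ (T.n : ℝ) ∧
    frechetDist P (subcurve T.map ab.1 ab.2) ≤ Δ

/-- `(S, f, g)` is a pathlet-preserving simplification of `T`:
`(f,g)` is a `2Δ`-matching between `S` and `T`, and for every subcurve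
`T[a,b]` and every curve `P'` with `d_F(P', T[a,b]) ≤ Δ`, the subcurve
`S[s,t]` matched to `T[a,b]` satisfies `|S[s,t]| ≤ |P'| + 2 - |ℕ ∩ {s,t}|`. -/
def IsPathletPreservingSimpl {d : ℕ} (T : PolyCurve d) (Δ : ℝ)
    (S : PolyCurve d) (f g : ℝ → ℝ) : Prop :=
  IsReparamOn f 1 (S.n : ℝ) ∧ IsReparamOn g 1 (T.n : ℝ) ∧
  (∀ t ∈ Icc (0 : ℝ) 1, dist (S.map (f t)) (T.map (g t)) ≤ 2 * Δ) ∧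
  (∀ a b : ℝ, 1 ≤ a → a ≤ b → b ≤ (T.n : ℝ) →
    ∀ u v : ℝ, u ∈ Icc (0 : ℝ) 1 → v ∈ Icc (0 : ℝ) 1 → u ≤ v →
      g u = a → g v = b →
      ∀ P' : PolyCurve d, frechetDist (norm01 P') (subcurve T.map a b) ≤ Δ →
        vcount (f u) (f v) ≤ P'.n + 2 - natCount (f u) (f v))

/-! ### Auxiliary lemmas -/

lemma isReparamOn_id : IsReparamOn (fun t => t) 0 1 :=
  ⟨continuousOn_id, fun _ _ _ _ h => h, by simp⟩

namespace IsReparamOn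

variable {f : ℝ → ℝ} {a b : ℝ}

lemma le (hf : IsReparamOn f a b) : a ≤ b := by
  have h : (Icc a b).Nonempty := by
    rw [← hf.2.2]
    exact (nonempty_Icc.mpr zero_le_one).image f
  exact nonempty_Icc.mp h

lemma mem (hf : IsReparamOn f a b) {x : ℝ} (hx : x ∈ Icc (0:ℝ) 1) :
    f x ∈ Icc a b :=
  hf.2.2 ▸ mem_image_of_mem f hx

lemma map_zero (hf : IsReparamOn f a b) : f 0 = a := by
  have h0 : f 0 ∈ Icc a b := hf.mem (left_mem_Icc.mpr zero_le_one)
  have ha : a ∈ f '' Icc 0 1 := by rw [hf.2.2]; exact left_mem_Icc.mpr hf.le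
  obtain ⟨x, hx, hfx⟩ := ha
  have hle : f 0 ≤ f x := hf.2.1 (left_mem_Icc.mpr zero_le_one) hx hx.1
  rw [hfx] at hle
  exact le_antisymm hle h0.1

lemma map_one (hf : IsReparamOn f a b) : f 1 = b := by
  have h0 : f 1 ∈ Icc a b := hf.mem (right_mem_Icc.mpr zero_le_one)
  have hb : b ∈ f '' Icc 0 1 := by rw [hf.2.2]; exact right_mem_Icc.mpr hf.le
  obtain ⟨x, hx, hfx⟩ := hb
  have hle : f x ≤ f 1 := hf.2.1 hx (right_mem_Icc.mpr zero_le_one) hx.2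
  rw [hfx] at hle
  exact le_antisymm h0.2 hle

end IsReparamOn

/-- Existence of a matching achieving bound `δ`. -/
def FMatch {d : ℕ} (P Q : ℝ → EuclideanSpace ℝ (Fin d)) (δ : ℝ) : Prop :=
  ∃ f g : ℝ → ℝ, IsReparamOn f 0 1 ∧ IsReparamOn g 0 1 ∧
    ∀ t ∈ Icc (0 : ℝ) 1, dist (P (f t)) (Q (g t)) ≤ δ

namespace FMatch

variable {d : ℕ} {P Q R : ℝ → EuclideanSpace ℝ (Fin d)} {δ δ' δ1 δ2 : ℝ}

lemma mono (h : FMatch P Q δ) (hδ : δ ≤ δ') : FMatch P Q δ' := by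
  obtain ⟨f, g, hf, hg, hb⟩ := h
  exact ⟨f, g, hf, hg, fun t ht => (hb t ht).trans hδ⟩

lemma symm (h : FMatch P Q δ) : FMatch Q P δ := by
  obtain ⟨f, g, hf, hg, hb⟩ := h
  exact ⟨g, f, hg, hf, fun t ht => by rw [dist_comm]; exact hb t ht⟩

lemma frechetDist_le (h : FMatch P Q δ) (h0 : 0 ≤ δ) : frechetDist P Q ≤ δ := by
  unfold frechetDist
  exact csInf_le ⟨0, fun x hx => hx.1⟩ ⟨h0, h⟩

end FMatch

lemma fmatch_of_frechetDist_le {d : ℕ} {P Q : ℝ → EuclideanSpace ℝ (Fin d)} {δ : ℝ}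
    (hP : ContinuousOn P (Icc 0 1)) (hQ : ContinuousOn Q (Icc 0 1))
    (h : frechetDist P Q ≤ δ) {ε : ℝ} (hε : 0 < ε) : FMatch P Q (δ + ε) := by
  set A := {δ : ℝ | 0 ≤ δ ∧ FMatch P Q δ} with hA
  have hne : A.Nonempty := by
    have hdc : ContinuousOn (fun x => dist (P x) (Q x)) (Icc 0 1) :=
      (continuous_dist.comp_continuousOn (ContinuousOn.prodMk hP hQ) :
        ContinuousOn ((fun p : EuclideanSpace ℝ (Fin d) × EuclideanSpace ℝ (Fin d) => dist p.1 p.2) ∘ fun x => (P x, Q x)) (Icc 0 1))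
    obtain ⟨x, hx, hmax⟩ := isCompact_Icc.exists_isMaxOn (nonempty_Icc.mpr zero_le_one) hdc
    refine ⟨max (dist (P x) (Q x)) 0, le_max_right _ _,
      (fun t => t), (fun t => t), isReparamOn_id, isReparamOn_id, fun t ht => ?_⟩
    exact le_max_of_le_left (hmax ht)
  have hbdd : BddBelow A := ⟨0, fun y hy => hy.1⟩
  have hsd : sInf A ≤ δ := h
  have hlt : sInf A < δ + ε := lt_of_le_of_lt hsd (lt_add_of_pos_right δ hε)
  obtain ⟨δ₀, hδ₀A, hδ₀⟩ := (csInf_lt_iff hbdd hne).mp hlt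
  exact hδ₀A.2.mono hδ₀.le

/-- The key composition (triangle-type) lemma: matchings compose up to an
arbitrarily small error, provided the middle curve is continuous. -/
lemma fmatch_trans {d : ℕ} {P Q R : ℝ → EuclideanSpace ℝ (Fin d)} {δ1 δ2 ε : ℝ}
    (hQ : ContinuousOn Q (Icc 0 1)) (hε : 0 < ε)
    (h1 : FMatch P Q δ1) (h2 : FMatch Q R δ2) : FMatch P R (δ1 + δ2 + ε) := by
  obtain ⟨f1, g1, hf1, hg1, hb1⟩ := h1
  obtain ⟨f2, g2, hf2, hg2, hb2⟩ := h2
  obtain ⟨η, hη, hQη⟩ := Metric.uniformContinuousOn_iff.mp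
    (isCompact_Icc.uniformContinuousOn_of_continuous hQ) ε hε
  set c : ℝ := η / 2 with hc
  have hc0 : 0 < c := half_pos hη
  set cl : ℝ → ℝ := fun x => max 0 (min 1 x) with hcl
  have hclmem : ∀ x, cl x ∈ Icc (0:ℝ) 1 :=
    fun x => ⟨le_max_left _ _, max_le zero_le_one (min_le_left _ _)⟩
  have hclid : ∀ x ∈ Icc (0:ℝ) 1, cl x = x := by
    intro x hx
    simp only [hcl]
    rw [min_eq_right hx.2, max_eq_right hx.1]
  have hclmono : Monotone cl := fun x y h => max_le_max le_rfl (min_le_min le_rfl h)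
  have hclcont : Continuous cl := continuous_const.max (continuous_const.min continuous_id)
  set k : ℝ → ℝ := fun x => g1 (cl x) + c * x with hk
  have hkmono : StrictMono k := by
    intro x y hxy
    have h1' : g1 (cl x) ≤ g1 (cl y) := hg1.2.1 (hclmem x) (hclmem y) (hclmono hxy.le)
    have h2' : c * x < c * y := mul_lt_mul_of_pos_left hxy hc0
    simp only [hk]
    linarith
  have hkcont : Continuous k := by
    have : Continuous (g1 ∘ cl) := hg1.1.comp_continuous hclcont hclmem
    exact this.add (continuous_const.mul continuous_id)
  have hg1mem : ∀ x ∈ Icc (0:ℝ) 1, g1 x ∈ Icc (0:ℝ) 1 := fun x hx => hg1.mem hx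
  have hktop : Filter.Tendsto k Filter.atTop Filter.atTop := by
    have hbase : Filter.Tendsto (fun x : ℝ => c * x) Filter.atTop Filter.atTop :=
      Filter.Tendsto.const_mul_atTop hc0 Filter.tendsto_id
    refine Filter.tendsto_atTop_mono (fun x => ?_) hbase
    have h := (hg1mem (cl x) (hclmem x)).1
    show c * x ≤ g1 (cl x) + c * x
    linarith
  have hkbot : Filter.Tendsto k Filter.atBot Filter.atBot := by
    have hmain : Filter.Tendsto (fun x : ℝ => c * x + 1) Filter.atBot Filter.atBot := by
      apply Filter.tendsto_atBot_add_const_right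
      exact Filter.Tendsto.const_mul_atBot hc0 Filter.tendsto_id
    refine Filter.tendsto_atBot_mono (fun x => ?_) hmain
    have h := (hg1mem (cl x) (hclmem x)).2
    show g1 (cl x) + c * x ≤ c * x + 1
    linarith
  have hksurj : Function.Surjective k := hkcont.surjective hktop hkbot
  set e := StrictMono.orderIsoOfSurjective k hkmono hksurj with he
  have heapp : ∀ x, e x = k x := fun x => rfl
  have hesymm : ∀ y, k (e.symm y) = y :=
    fun y => StrictMono.orderIsoOfSurjective_self_symm_apply k hkmono hksurj y
  have hesymm' : ∀ x, e.symm (k x) = x :=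
    fun x => StrictMono.orderIsoOfSurjective_symm_apply_self k hkmono hksurj x
  have hk0 : k 0 = 0 := by
    simp only [hk]
    rw [hclid 0 ⟨le_rfl, zero_le_one⟩, hg1.map_zero]
    ring
  have hk1 : k 1 = 1 + c := by
    simp only [hk]
    rw [hclid 1 ⟨zero_le_one, le_rfl⟩, hg1.map_one]
    ring
  have he0 : e.symm 0 = 0 := by nth_rewrite 1 [← hk0]; exact hesymm' 0
  have he1 : e.symm (1 + c) = 1 := by rw [← hk1]; exact hesymm' 1
  have h1c : (0:ℝ) < 1 + c := by linarith
  set m : ℝ → ℝ := fun τ => e.symm ((1 + c) * f2 τ) with hm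
  have hmmem : ∀ τ ∈ Icc (0:ℝ) 1, m τ ∈ Icc (0:ℝ) 1 := by
    intro τ hτ
    have hf2τ : f2 τ ∈ Icc (0:ℝ) 1 := hf2.mem hτ
    constructor
    · rw [← he0]
      exact e.symm.monotone (by nlinarith [hf2τ.1])
    · rw [← he1]
      exact e.symm.monotone (by nlinarith [hf2τ.2])
  have hkey : ∀ τ ∈ Icc (0:ℝ) 1, dist (P (f1 (m τ))) (R (g2 τ)) ≤ δ1 + δ2 + ε := by
    intro τ hτ
    set z := m τ with hz
    have hz01 : z ∈ Icc (0:ℝ) 1 := hmmem τ hτ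
    have hkz : k z = (1 + c) * f2 τ := hesymm _
    have hg1z : g1 z = (1 + c) * f2 τ - c * z := by
      have : g1 (cl z) + c * z = (1 + c) * f2 τ := hkz
      rw [hclid z hz01] at this
      linarith
    have hf2τ : f2 τ ∈ Icc (0:ℝ) 1 := hf2.mem hτ
    have hdistη : dist (g1 z) (f2 τ) < η := by
      rw [Real.dist_eq]
      have heq : g1 z - f2 τ = c * (f2 τ - z) := by rw [hg1z]; ring
      rw [heq, abs_mul, abs_of_pos hc0]
      have habs : |f2 τ - z| ≤ 1 :=
        abs_le.mpr ⟨by linarith [hf2τ.1, hz01.2], by linarith [hf2τ.2, hz01.1]⟩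
      calc c * |f2 τ - z| ≤ c * 1 := by nlinarith
        _ = η / 2 := by rw [hc]; ring
        _ < η := by linarith
    have hQmid : dist (Q (g1 z)) (Q (f2 τ)) < ε :=
      hQη (g1 z) (hg1.mem hz01) (f2 τ) hf2τ hdistη
    calc dist (P (f1 z)) (R (g2 τ))
        ≤ dist (P (f1 z)) (Q (g1 z)) + dist (Q (g1 z)) (Q (f2 τ))
            + dist (Q (f2 τ)) (R (g2 τ)) := dist_triangle4 _ _ _ _
      _ ≤ δ1 + ε + δ2 := by
          have := hb1 z hz01
          have := hb2 τ hτ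
          linarith
      _ = δ1 + δ2 + ε := by ring
  -- `m` is a reparameterization
  have hmcont : ContinuousOn m (Icc 0 1) := by
    have : ContinuousOn (fun τ => (1 + c) * f2 τ) (Icc 0 1) := continuousOn_const.mul hf2.1
    exact e.symm.continuous.comp_continuousOn this
  have hmmono : MonotoneOn m (Icc 0 1) := by
    intro x hx y hy hxy
    exact e.symm.monotone (by nlinarith [hf2.2.1 hx hy hxy])
  have hmimg : m '' Icc 0 1 = Icc 0 1 := by
    apply Subset.antisymm
    · rintro _ ⟨τ, hτ, rfl⟩
      exact hmmem τ hτ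
    · intro y hy
      have hey : e y ∈ Icc (0:ℝ) (1 + c) := by
        rw [heapp y]
        constructor
        · rw [← hk0]; exact hkmono.monotone hy.1
        · rw [← hk1]; exact hkmono.monotone hy.2
      have hdiv : e y / (1 + c) ∈ Icc (0:ℝ) 1 := by
        constructor
        · exact div_nonneg hey.1 h1c.le
        · rw [div_le_one h1c]; exact hey.2
      have : e y / (1 + c) ∈ f2 '' Icc 0 1 := by rw [hf2.2.2]; exact hdiv
      obtain ⟨τ, hτ, hfτ⟩ := this
      refine ⟨τ, hτ, ?_⟩
      simp only [hm]
      rw [hfτ, mul_div_cancel₀ _ (ne_of_gt h1c)]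
      exact e.symm_apply_apply y
  have hF : IsReparamOn (fun τ => f1 (m τ)) 0 1 := by
    refine ⟨?_, ?_, ?_⟩
    · exact hf1.1.comp hmcont (fun τ hτ => hmmem τ hτ)
    · intro x hx y hy hxy
      exact hf1.2.1 (hmmem x hx) (hmmem y hy) (hmmono hx hy hxy)
    · have : (fun τ => f1 (m τ)) '' Icc 0 1 = f1 '' (m '' Icc 0 1) := by
        rw [← image_comp]; rfl
      rw [this, hmimg, hf1.2.2]
  exact ⟨fun τ => f1 (m τ), g2, hF, hg2, hkey⟩

/-- Gluing continuity on two closed sets. -/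
lemma continuousOn_union_closed {α β : Type*} [TopologicalSpace α] [TopologicalSpace β]
    {f : α → β} {s t : Set α} (hs : IsClosed s) (ht : IsClosed t)
    (hfs : ContinuousOn f s) (hft : ContinuousOn f t) : ContinuousOn f (s ∪ t) := by
  intro x hx
  have hcs : ContinuousWithinAt f s x := by
    by_cases h : x ∈ s
    · exact hfs x h
    · exact continuousWithinAt_of_notMem_closure (by rwa [hs.closure_eq])
  have hct : ContinuousWithinAt f t x := by
    by_cases h : x ∈ t
    · exact hft x h
    · exact continuousWithinAt_of_notMem_closure (by rwa [ht.closure_eq])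
  exact hcs.union hct

lemma PolyCurve.continuousOn {d : ℕ} (C : PolyCurve d) :
    ContinuousOn C.map (Icc 1 (C.n : ℝ)) := by
  suffices h : ∀ k : ℕ, 1 ≤ k → k ≤ C.n → ContinuousOn C.map (Icc 1 (k : ℝ)) from
    h C.n C.hn le_rfl
  intro k
  induction k with
  | zero => intro h1 _; omega
  | succ k ih =>
    intro _ hn
    rcases Nat.eq_zero_or_pos k with hk0 | hk1
    · subst hk0
      have h01 : ((0 + 1 : ℕ) : ℝ) = 1 := by norm_num
      rw [h01, Icc_self]
      exact continuousOn_singleton _ _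
    · have hkn : k ≤ C.n := by omega
      have hcast : ((k + 1 : ℕ) : ℝ) = (k : ℝ) + 1 := by push_cast; ring
      have hcell : ContinuousOn C.map (Icc (k : ℝ) ((k : ℝ) + 1)) := by
        apply ContinuousOn.congr
          (f := fun x : ℝ => (1 - (x - (k:ℝ))) • C.map k + (x - (k:ℝ)) • C.map ((k:ℝ) + 1))
        · apply ContinuousOn.add
          · exact ((continuous_const.sub (continuous_id.sub continuous_const)).smul continuous_const).continuousOn
          · exact ((continuous_id.sub continuous_const).smul continuous_const).continuousOn
        · intro x hx
          have hpl := C.piecewise_linear k hk1 (by omega) (x - (k:ℝ))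
            ⟨by linarith [hx.1], by linarith [hx.2]⟩
          have hxk : (k:ℝ) + (x - (k:ℝ)) = x := by ring
          rw [hxk] at hpl
          exact hpl
      have hone : (1:ℝ) ≤ (k:ℝ) := by exact_mod_cast hk1
      have hunion : Icc (1:ℝ) (k:ℝ) ∪ Icc (k:ℝ) ((k:ℝ) + 1) = Icc (1:ℝ) ((k:ℝ) + 1) :=
        Icc_union_Icc_eq_Icc hone (by linarith)
      rw [hcast, ← hunion]
      exact continuousOn_union_closed isClosed_Icc isClosed_Icc (ih hk1 hkn) hcell

lemma subcurve_continuousOn {d : ℕ} (C : PolyCurve d) {a b : ℝ}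
    (ha : 1 ≤ a) (hab : a ≤ b) (hb : b ≤ (C.n : ℝ)) :
    ContinuousOn (subcurve C.map a b) (Icc 0 1) := by
  apply C.continuousOn.comp (by continuity : Continuous fun t : ℝ => a + t * (b - a)).continuousOn
  intro τ hτ
  have h1 : 0 ≤ τ * (b - a) := mul_nonneg hτ.1 (by linarith)
  have h2 : τ * (b - a) ≤ b - a := mul_le_of_le_one_left (by linarith) hτ.2
  have hmem : a + τ * (b - a) ∈ Icc (1:ℝ) (C.n : ℝ) := ⟨by linarith, by linarith⟩
  simpa using hmem

lemma norm01_continuousOn {d : ℕ} (P : PolyCurve d) :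
    ContinuousOn (norm01 P) (Icc 0 1) :=
  subcurve_continuousOn P le_rfl (by exact_mod_cast P.hn) le_rfl

/-- Restricting a reparameterization to `[u,v]` yields a reparameterization of the
corresponding subcurve. -/
lemma exists_sub_reparam {f : ℝ → ℝ} {A B u v : ℝ} (hf : IsReparamOn f A B)
    (hu : u ∈ Icc (0:ℝ) 1) (hv : v ∈ Icc (0:ℝ) 1) (huv : u ≤ v) :
    ∃ φ : ℝ → ℝ, IsReparamOn φ 0 1 ∧
      ∀ τ ∈ Icc (0:ℝ) 1, f u + φ τ * (f v - f u) = f (u + τ * (v - u)) := by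
  set w : ℝ → ℝ := fun τ => u + τ * (v - u) with hw
  have hwmem : ∀ τ ∈ Icc (0:ℝ) 1, w τ ∈ Icc u v := by
    intro τ hτ
    have h1 : 0 ≤ τ * (v - u) := mul_nonneg hτ.1 (by linarith)
    have h2 : τ * (v - u) ≤ v - u := mul_le_of_le_one_left (by linarith) hτ.2
    exact ⟨by simp only [hw]; linarith, by simp only [hw]; linarith⟩
  have hsub : Icc u v ⊆ Icc (0:ℝ) 1 := Icc_subset_Icc hu.1 hv.2
  have hw01 : ∀ τ ∈ Icc (0:ℝ) 1, w τ ∈ Icc (0:ℝ) 1 := fun τ hτ => hsub (hwmem τ hτ)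
  have hst : f u ≤ f v := hf.2.1 hu hv huv
  rcases eq_or_lt_of_le hst with hst' | hst'
  · -- constant piece
    refine ⟨fun τ => τ, isReparamOn_id, fun τ hτ => ?_⟩
    have h1 : f u ≤ f (w τ) := hf.2.1 hu (hw01 τ hτ) (hwmem τ hτ).1
    have h2 : f (w τ) ≤ f v := hf.2.1 (hw01 τ hτ) hv (hwmem τ hτ).2
    have : f (w τ) = f u := le_antisymm (hst' ▸ h2) h1
    rw [this]
    rw [← hst']
    ring
  · -- strictly increasing piece
    have htsne : f v - f u ≠ 0 := by linarith
    have htpos : 0 < f v - f u := by linarith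
    have huv' : u < v := by
      rcases eq_or_lt_of_le huv with h | h
      · exfalso; rw [h] at hst'; exact lt_irrefl _ hst'
      · exact h
    refine ⟨fun τ => (f (w τ) - f u) / (f v - f u), ?_, fun τ hτ => ?_⟩
    · refine ⟨?_, ?_, ?_⟩
      · have hwcont : Continuous w := by continuity
        have hcomp : ContinuousOn (f ∘ w) (Icc 0 1) :=
          hf.1.comp hwcont.continuousOn (fun τ hτ => hw01 τ hτ)
        exact ((hcomp.sub continuousOn_const).div continuousOn_const (fun _ _ => htsne))
      · intro x hx y hy hxy
        have hwxy : w x ≤ w y := by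
          simp only [hw]
          nlinarith
        have h := hf.2.1 (hw01 x hx) (hw01 y hy) hwxy
        show (f (w x) - f u) / (f v - f u) ≤ (f (w y) - f u) / (f v - f u)
        rw [div_le_div_iff₀ htpos htpos]
        nlinarith
      · apply Subset.antisymm
        · rintro _ ⟨τ, hτ, rfl⟩
          have h1 : f u ≤ f (w τ) := hf.2.1 hu (hw01 τ hτ) (hwmem τ hτ).1
          have h2 : f (w τ) ≤ f v := hf.2.1 (hw01 τ hτ) hv (hwmem τ hτ).2
          constructor
          · exact div_nonneg (by linarith) htpos.le
          · rw [div_le_one htpos]; linarith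
        · intro y hy
          have hyval : f u + y * (f v - f u) ∈ Icc (f u) (f v) := by
            constructor
            · nlinarith [hy.1]
            · nlinarith [hy.2]
          have hIVT : Icc (f u) (f v) ⊆ f '' Icc u v :=
            intermediate_value_Icc huv (hf.1.mono hsub)
          obtain ⟨x, hx, hfx⟩ := hIVT hyval
          refine ⟨(x - u) / (v - u), ?_, ?_⟩
          · constructor
            · exact div_nonneg (by linarith [hx.1]) (by linarith)
            · rw [div_le_one (by linarith)]; linarith [hx.2]
          · have hwx : w ((x - u) / (v - u)) = x := by
              simp only [hw]
              rw [div_mul_cancel₀ _ (by linarith : v - u ≠ 0)]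
              ring
            show (f (w ((x - u) / (v - u))) - f u) / (f v - f u) = y
            rw [hwx, hfx]
            have hnum : f u + y * (f v - f u) - f u = y * (f v - f u) := by ring
            rw [hnum, mul_div_assoc, div_self htsne, mul_one]
    · show f u + (f (w τ) - f u) / (f v - f u) * (f v - f u) = f (w τ)
      rw [div_mul_cancel₀ _ htsne]
      ring

/-- The main construction: choosing the matched subcurve of `S` for `T[a,b]`. -/
lemma aux_main {d : ℕ} (T : PolyCurve d) (Δ : ℝ)
    (S : PolyCurve d) (f g : ℝ → ℝ) (hS : IsPathletPreservingSimpl T Δ S f g)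
    (a b : ℝ) (ha : 1 ≤ a) (hab : a ≤ b) (hb : b ≤ (T.n : ℝ))
    (P₀ : PolyCurve d) (hfr : frechetDist (norm01 P₀) (subcurve T.map a b) ≤ Δ) :
    ∃ s t : ℝ, 1 ≤ s ∧ s ≤ t ∧ t ≤ (S.n : ℝ) ∧
      vcount s t ≤ P₀.n + 2 - natCount s t ∧
      FMatch (subcurve S.map s t) (subcurve T.map a b) (2 * Δ) := by
  obtain ⟨hfRep, hgRep, hmatch, hvc⟩ := hS
  have hpre : ∃ u v : ℝ, u ∈ Icc (0:ℝ) 1 ∧ v ∈ Icc (0:ℝ) 1 ∧ u ≤ v ∧ g u = a ∧ g v = b := by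
    have hamem : a ∈ g '' Icc 0 1 := by
      rw [hgRep.2.2]; exact ⟨ha, le_trans hab hb⟩
    have hbmem : b ∈ g '' Icc 0 1 := by
      rw [hgRep.2.2]; exact ⟨le_trans ha hab, hb⟩
    obtain ⟨u0, hu0, hgu0⟩ := hamem
    obtain ⟨v0, hv0, hgv0⟩ := hbmem
    rcases le_or_gt u0 v0 with h | h
    · exact ⟨u0, v0, hu0, hv0, h, hgu0, hgv0⟩
    · have hba : b ≤ a := by
        rw [← hgu0, ← hgv0]
        exact hgRep.2.1 hv0 hu0 h.le
      have heq : a = b := le_antisymm hab hba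
      exact ⟨v0, u0, hv0, hu0, h.le, by rw [hgv0, heq], by rw [hgu0, ← heq]⟩
  obtain ⟨u, v, hu, hv, huv, hgu, hgv⟩ := hpre
  refine ⟨f u, f v, (hfRep.mem hu).1, hfRep.2.1 hu hv huv, (hfRep.mem hv).2, ?_, ?_⟩
  · exact hvc a b ha hab hb u v hu hv huv hgu hgv P₀ hfr
  · obtain ⟨φ, hφ, hφeq⟩ := exists_sub_reparam hfRep hu hv huv
    obtain ⟨ψ, hψ, hψeq⟩ := exists_sub_reparam hgRep hu hv huv
    refine ⟨φ, ψ, hφ, hψ, fun τ hτ => ?_⟩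
    have hwmem : u + τ * (v - u) ∈ Icc (0:ℝ) 1 := by
      have h1 : 0 ≤ τ * (v - u) := mul_nonneg hτ.1 (by linarith)
      have h2 : τ * (v - u) ≤ v - u := mul_le_of_le_one_left (by linarith) hτ.2
      exact ⟨by linarith [hu.1], by linarith [hv.2]⟩
    show dist (S.map (f u + φ τ * (f v - f u))) (T.map (a + ψ τ * (b - a))) ≤ 2 * Δ
    rw [hφeq τ hτ,
      show a + ψ τ * (b - a) = g (u + τ * (v - u)) by
        rw [← hgu, ← hgv]; exact hψeq τ hτ]
    exact hmatch _ hwmem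

/-- For a pathlet-preserving simplification `S` of `T` and any
`(ℓ, Δ)`-pathlet `(P, I)` of `T`, there is a subcurve `S[s,t]` such that
`(S[s,t], I)` is an `(ℓ + 2 - |ℕ ∩ {s,t}|, 4Δ)`-pathlet of `T`. -/
theorem stmt_7 {d : ℕ} (T : PolyCurve d) (Δ : ℝ) (hΔ : 0 ≤ Δ)
    (S : PolyCurve d) (f g : ℝ → ℝ)
    (hS : IsPathletPreservingSimpl T Δ S f g)
    (ℓ : ℕ) (P : PolyCurve d) (I : Set (ℝ × ℝ))
    (hP : IsPathlet T ℓ Δ (norm01 P) P.n I) :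
    ∃ s t : ℝ, 1 ≤ s ∧ s ≤ t ∧ t ≤ (S.n : ℝ) ∧
      IsPathlet T (ℓ + 2 - natCount s t) (4 * Δ) (subcurve S.map s t)
        (vcount s t) I := by
  obtain ⟨hPn, hI⟩ := hP
  by_cases hIe : I.Nonempty
  · obtain ⟨ab, habI⟩ := hIe
    obtain ⟨ha1, hab2, hab3, habF⟩ := hI ab habI
    obtain ⟨s, t, hs1, hst, htn, hvb, hM⟩ :=
      aux_main T Δ S f g hS ab.1 ab.2 ha1 hab2 hab3 P habF
    refine ⟨s, t, hs1, hst, htn, ?_, ?_⟩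
    · exact le_trans hvb (Nat.sub_le_sub_right (by omega) _)
    · intro ab' habI'
      obtain ⟨ha1', hab2', hab3', habF'⟩ := hI ab' habI'
      refine ⟨ha1', hab2', hab3', ?_⟩
      have hcP : ContinuousOn (norm01 P) (Icc 0 1) := norm01_continuousOn P
      have hcT : ContinuousOn (subcurve T.map ab.1 ab.2) (Icc 0 1) :=
        subcurve_continuousOn T ha1 hab2 hab3
      refine le_of_forall_pos_le_add fun ε hε => ?_
      have hε4 : (0:ℝ) < ε / 4 := by linarith
      have h1 : FMatch (norm01 P) (subcurve T.map ab.1 ab.2) (Δ + ε / 4) :=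
        fmatch_of_frechetDist_le hcP hcT habF hε4
      have h2 : FMatch (norm01 P) (subcurve T.map ab'.1 ab'.2) (Δ + ε / 4) :=
        fmatch_of_frechetDist_le hcP (subcurve_continuousOn T ha1' hab2' hab3') habF' hε4
      have h4 : FMatch (subcurve S.map s t) (norm01 P) (2 * Δ + (Δ + ε / 4) + ε / 4) :=
        fmatch_trans hcT hε4 hM h1.symm
      have h5 : FMatch (subcurve S.map s t) (subcurve T.map ab'.1 ab'.2)
          ((2 * Δ + (Δ + ε / 4) + ε / 4) + (Δ + ε / 4) + ε / 4) :=
        fmatch_trans hcP hε4 h4 h2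
      have h6 : FMatch (subcurve S.map s t) (subcurve T.map ab'.1 ab'.2) (4 * Δ + ε) :=
        h5.mono (by linarith)
      exact h6.frechetDist_le (by linarith)
  · -- `I` is empty: use the constant pathlet at `T(1)`
    have hIemp : I = ∅ := not_nonempty_iff_eq_empty.mp hIe
    set P₀ : PolyCurve d :=
      ⟨1, le_rfl, fun _ => T.map 1, fun i hi hi2 _ _ => by omega⟩ with hP₀
    have hT1 : (1:ℝ) ≤ (T.n : ℝ) := by exact_mod_cast T.hn
    have hfr : frechetDist (norm01 P₀) (subcurve T.map 1 1) ≤ Δ := by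
      apply FMatch.frechetDist_le _ hΔ
      refine ⟨fun t => t, fun t => t, isReparamOn_id, isReparamOn_id, fun t _ => ?_⟩
      show dist (P₀.map (1 + t * ((P₀.n : ℝ) - 1))) (T.map (1 + t * (1 - 1))) ≤ Δ
      have : (1:ℝ) + t * (1 - 1) = 1 := by ring
      rw [this]
      show dist (T.map 1) (T.map 1) ≤ Δ
      rw [dist_self]
      exact hΔ
    obtain ⟨s, t, hs1, hst, htn, hvb, _⟩ :=
      aux_main T Δ S f g hS 1 1 le_rfl le_rfl hT1 P₀ hfr
    refine ⟨s, t, hs1, hst, htn, ?_, ?_⟩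
    · have hl : 1 ≤ ℓ := le_trans P.hn hPn
      refine le_trans hvb (Nat.sub_le_sub_right ?_ _)
      show P₀.n + 2 ≤ ℓ + 2
      simp only [hP₀]
      omega
    · intro ab habI
      rw [hIemp] at habI
      exact absurd habI (notMem_empty ab)

end
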